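/- If P is a prime congruence of the tropical Laurent polynomial semiring contained in some geometric prime congruence, then the variety V(P) (the set of points of ℝⁿ whose associated evaluation congruence contains P) consists of exactly one point; in general, for any prime congruence P, V(P) has at most one point. -/

import Mathlib

/-- The tropical semifield `𝕋 = (ℝ ∪ {-∞}, max, +)`, realized as
`Tropical (WithTop (OrderDual ℝ))`: tropical addition is `max` and tropical
multiplication is ordinary addition of reals, `0 = -∞`. -/
abbrev T : Type := Tropical (WithTop (OrderDual ℝ))

/-- The tropical Laurent polynomial semiring `T[x₁^{±1},…,x_n^{±1}]`. -/
abbrev TLaur (n : ℕ) : Type := AddMonoidAlgebra T (Fin n → ℤ)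

/-- The tropical polynomial semiring `T[x₁,…,x_n]`. -/
abbrev TPoly (n : ℕ) : Type := AddMonoidAlgebra T (Fin n → ℕ)

/-- View an element of a monomial-algebra over `T` as a finitely supported function. -/
def toF {G : Type} (f : AddMonoidAlgebra T G) : G →₀ T := f.coeff

/-- The twisted product of pairs over a commutative semiring. -/
def tw {R : Type*} [CommSemiring R] (α β : R × R) : R × R :=
  (α.1 * β.1 + α.2 * β.2, α.1 * β.2 + α.2 * β.1)

/-- A congruence is prime if it is proper and whenever the twisted product of two
pairs lies in it, one of the pairs lies in it. -/
def IsPrimeCon {R : Type*} [CommSemiring R] (C : RingCon R) : Prop :=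
  (∃ a b : R, ¬ C a b) ∧
    ∀ α β : R × R, C (tw α β).1 (tw α β).2 → C α.1 α.2 ∨ C β.1 β.2

/-- The value of the `u`-th term of the Laurent polynomial `f` at the point `p ∈ ℝⁿ`. -/
noncomputable def trm {n : ℕ} (f : TLaur n) (p : Fin n → ℝ) (u : Fin n → ℤ) : T :=
  toF f u * Tropical.trop ((OrderDual.toDual (∑ i, (u i : ℝ) * p i) : OrderDual ℝ) :
    WithTop (OrderDual ℝ))

/-- Tropical evaluation of the Laurent polynomial `f` at `p ∈ ℝⁿ`
(the maximum of its term values). -/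
noncomputable def evl {n : ℕ} (f : TLaur n) (p : Fin n → ℝ) : T :=
  ∑ u ∈ (toF f).support, trm f p u

/-- `f` tropically vanishes at `p`: its value is `-∞`, or its maximum is attained
by at least two distinct terms. -/
def Vanishes {n : ℕ} (f : TLaur n) (p : Fin n → ℝ) : Prop :=
  evl f p = 0 ∨ ∃ u ∈ (toF f).support, ∃ v ∈ (toF f).support,
    u ≠ v ∧ trm f p u = evl f p ∧ trm f p v = evl f p

noncomputable def tv (r : ℝ) : T := Tropical.trop ((OrderDual.toDual r : OrderDual ℝ) : WithTop (OrderDual ℝ))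

lemma tv_inj : Function.Injective tv := by
  intro a b h
  have := Tropical.untrop_injective.eq_iff.mpr h
  simpa [tv] using congrArg Tropical.untrop h

lemma tv_add (a b : ℝ) : tv a + tv b = tv (max a b) := by
  apply Tropical.untrop_injective
  rw [Tropical.untrop_add]
  show min ((OrderDual.toDual a : ℝᵒᵈ) : WithTop ℝᵒᵈ) ((OrderDual.toDual b : ℝᵒᵈ) : WithTop ℝᵒᵈ) = _
  rw [← WithTop.coe_min, ← toDual_sup]
  rfl

lemma tv_mul (a b : ℝ) : tv a * tv b = tv (a + b) := by
  apply Tropical.untrop_injective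
  rw [Tropical.untrop_mul]
  show ((OrderDual.toDual a : ℝᵒᵈ) : WithTop ℝᵒᵈ) + ((OrderDual.toDual b : ℝᵒᵈ) : WithTop ℝᵒᵈ) = _
  rw [← WithTop.coe_add]
  rfl

lemma tv_ne_zero (a : ℝ) : tv a ≠ 0 := by
  intro h
  have := congrArg Tropical.untrop h
  simp [tv, Tropical.untrop_zero] at this

lemma one_eq_tv : (1 : T) = tv 0 := rfl

lemma idem {n : ℕ} (x : TLaur n) : x + x = x := by
  ext u
  exact Tropical.add_self _

lemma order_lemma {n : ℕ} {P : RingCon (TLaur n)}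
    (hP : ∀ α β : (TLaur n) × (TLaur n),
      P (α.1 * β.1 + α.2 * β.2) (α.1 * β.2 + α.2 * β.1) → P α.1 α.2 ∨ P β.1 β.2)
    (a b : TLaur n) : P (a + b) a ∨ P (a + b) b := by
  apply hP (a + b, a) (a + b, b)
  have key : (a+b)*(a+b) + a*b = (a+b)*b + a*(a+b) := by
    have h1 : (a+b)*(a+b) + a*b = (a*a + b*b) + (a*b + (a*b + a*b)) := by ring
    have h2 : (a+b)*b + a*(a+b) = (a*a + b*b) + (a*b + a*b) := by ring
    rw [h1, h2, idem (a*b), idem (a*b)]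
  exact key ▸ P.refl _

lemma trm_add {n : ℕ} (f g : TLaur n) (p : Fin n → ℝ) (u : Fin n → ℤ) :
    trm (f + g) p u = trm f p u + trm g p u := by
  unfold trm
  rw [show toF (f + g) u = toF f u + toF g u from rfl, add_mul]

lemma evl_add {n : ℕ} (f g : TLaur n) (p : Fin n → ℝ) :
    evl (f + g) p = evl f p + evl g p := by
  classical
  have hsup : ∀ h : TLaur n, (toF h).support ⊆ (toF f).support ∪ (toF g).support →
      evl h p = ∑ u ∈ (toF f).support ∪ (toF g).support, trm h p u := fun h hh =>
    Finset.sum_subset hh (fun u _ hu => by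
      simp [trm, Finsupp.notMem_support_iff.mp hu])
  rw [hsup (f + g) (Finsupp.support_add (g₁ := toF f) (g₂ := toF g)), hsup f Finset.subset_union_left,
    hsup g Finset.subset_union_right, ← Finset.sum_add_distrib]
  exact Finset.sum_congr rfl fun u _ => trm_add f g p u

lemma evl_single {n : ℕ} (u : Fin n → ℤ) (t : T) (ht : t ≠ 0) (p : Fin n → ℝ) :
    evl (AddMonoidAlgebra.single u t) p = t * tv (∑ i, (u i : ℝ) * p i) := by
  unfold evl
  rw [show toF (AddMonoidAlgebra.single u t) = Finsupp.single u t from rfl,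
    Finsupp.support_single_ne_zero u ht, Finset.sum_singleton]
  unfold trm
  simp [toF, tv]

/-- The variety of a prime congruence `P` (points whose evaluation congruence contains
`P`) has at most one point; if `P` is contained in some geometric (evaluation)
congruence, it is exactly one point. -/
theorem variety_of_prime_congruence {n : ℕ} (P : RingCon (TLaur n)) (hP : IsPrimeCon P) :
    Set.Subsingleton {p : Fin n → ℝ | ∀ f g : TLaur n, P f g → evl f p = evl g p} ∧
    ((∃ p : Fin n → ℝ, ∀ f g : TLaur n, P f g → evl f p = evl g p) →
      ∃! p : Fin n → ℝ, ∀ f g : TLaur n, P f g → evl f p = evl g p) := by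
  have hP2 : ∀ α β : (TLaur n) × (TLaur n),
      P (α.1 * β.1 + α.2 * β.2) (α.1 * β.2 + α.2 * β.1) → P α.1 α.2 ∨ P β.1 β.2 := by
    intro α β h
    exact hP.2 α β h
  have hsub : Set.Subsingleton {p : Fin n → ℝ | ∀ f g : TLaur n, P f g → evl f p = evl g p} := by
    intro p hp q hq
    by_contra hne
    obtain ⟨i, hi⟩ := Function.ne_iff.mp hne
    set m : ℝ := (p i + q i) / 2 with hm
    set f : TLaur n := AddMonoidAlgebra.single (Pi.single i 1) 1 with hf
    set g : TLaur n := AddMonoidAlgebra.single 0 (tv m) with hg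
    have hef : ∀ r : Fin n → ℝ, evl f r = tv (r i) := by
      intro r
      rw [hf, evl_single _ _ (by rw [one_eq_tv]; exact tv_ne_zero 0) r, one_eq_tv, tv_mul,
        zero_add]
      congr 1
      have : ∀ j, (((Pi.single i 1 : Fin n → ℤ) j : ℤ) : ℝ) * r j = if j = i then r i else 0 := by
        intro j
        rcases eq_or_ne j i with h | h <;> simp [h, Pi.single_apply]
      simp only [this]
      simp
    have heg : ∀ r : Fin n → ℝ, evl g r = tv m := by
      intro r
      rw [hg, evl_single _ _ (tv_ne_zero m) r]
      simp [tv_mul]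
    have hcases := order_lemma hP2 f g
    have hlt : p i < q i ∨ q i < p i := lt_or_gt_of_ne hi
    rcases hcases with hc | hc
    · have e1 := hp _ _ hc
      have e2 := hq _ _ hc
      rw [evl_add, hef, heg, tv_add] at e1 e2
      have m1 : max (p i) m = p i := tv_inj e1
      have m2 : max (q i) m = q i := tv_inj e2
      have : m ≤ p i := le_of_max_le_right (le_of_eq m1)
      have : m ≤ q i := le_of_max_le_right (le_of_eq m2)
      rcases hlt with h | h <;> · rw [hm] at *; linarith
    · have e1 := hp _ _ hc
      have e2 := hq _ _ hc
      rw [evl_add, hef, heg, tv_add] at e1 e2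
      have m1 : max (p i) m = m := tv_inj e1
      have m2 : max (q i) m = m := tv_inj e2
      have : p i ≤ m := le_of_max_le_left (le_of_eq m1)
      have : q i ≤ m := le_of_max_le_left (le_of_eq m2)
      rcases hlt with h | h <;> · rw [hm] at *; linarith
  refine ⟨hsub, ?_⟩
  rintro ⟨p, hp⟩
  exact ⟨p, hp, fun q hq => hsub hq hp⟩
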